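/- arXiv:cmp-lg/9603002 — 2 statements merged into one kernel-verified Lean document; each statement's English description precedes it below -/
import Mathlib

section
/- For any context-free grammar G and any stack congruence ≡ on the canonical LR(0) shift-reduce recognizer R(G) of G, L(G) ⊆ L(F_≡(G)), where F_≡(G) is the flattening of the unfolded recognizer R(G)_≡. -/
/-!
Infrastructure for finite-state approximation of context-free grammars
(Pereira & Wright). We use Mathlib's `ContextFreeGrammar`.

A dotted rule `A → α · β` is represented as `(some A, α, β)`;
the auxiliary dotted rules `S' → · S` and `S' → S ·` are represented with
first component `none`.  States of the LR(0) characteristic machine `M(G)`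
are sets of dotted rules (the determinization by the subset construction);
the transition function `next` is total, with the empty set `∅` playing the
role of "undefined", so genuine transitions are those with nonempty target.
-/

namespace LRApprox

universe uN uT

variable {T : Type uT}

/-- Context-free grammar with nonterminals in an arbitrary universe, as in the Mathlib
version this file was written against (current Mathlib restricts nonterminals to `Type`). -/
structure ContextFreeGrammar.{uN', uT'} (T : Type uT') where
  /-- Type of nonterminals. -/
  NT : Type uN'
  /-- Initial nonterminal. -/
  initial : NT
  /-- Rewrite rules. -/
  rules : Finset (ContextFreeRule T NT)

/-- One step of a context-free transformation by a rule of `g`. -/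
def ContextFreeGrammar.Produces (g : ContextFreeGrammar.{uN} T) (u v : List (Symbol T g.NT)) :
    Prop :=
  ∃ r ∈ g.rules, r.Rewrites u v

/-- Some number of rewriting steps. -/
abbrev ContextFreeGrammar.Derives (g : ContextFreeGrammar.{uN} T) :
    List (Symbol T g.NT) → List (Symbol T g.NT) → Prop :=
  Relation.ReflTransGen g.Produces

/-- `g` derives `s` from its initial nonterminal. -/
def ContextFreeGrammar.Generates (g : ContextFreeGrammar.{uN} T) (s : List (Symbol T g.NT)) :
    Prop :=
  g.Derives [Symbol.nonterminal g.initial] s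

/-- The language generated by `g`. -/
def ContextFreeGrammar.language (g : ContextFreeGrammar.{uN} T) : Language T :=
  { w : List T | g.Generates (w.map Symbol.terminal) }

/-- A dotted rule `A → α · β`; `none` as first component stands for the
auxiliary start symbol `S'`. -/
abbrev DottedRule (g : ContextFreeGrammar.{uN} T) : Type _ :=
  Option g.NT × List (Symbol T g.NT) × List (Symbol T g.NT)

/-- A state of the characteristic machine `M(G)`: a set of dotted rules. -/
abbrev LRState (g : ContextFreeGrammar.{uN} T) : Type _ := Set (DottedRule g)

/-- Closure of a set of dotted rules: whenever `A → α · B β` is present and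
`B → γ` is a rule, add `B → · γ`. -/
inductive Closure (g : ContextFreeGrammar.{uN} T) (R : Set (DottedRule g)) :
    DottedRule g → Prop
  | base {d : DottedRule g} : d ∈ R → Closure g R d
  | step {A : Option g.NT} {α β : List (Symbol T g.NT)} {B : g.NT}
      (r : ContextFreeRule T g.NT) :
      Closure g R (A, α, Symbol.nonterminal B :: β) →
      r ∈ g.rules → r.input = B → Closure g R (some B, [], r.output)

/-- The transition function `δ` of `M(G)`: shift the dot over `X` and take the
closure.  The empty set plays the role of "undefined". -/
def next (g : ContextFreeGrammar.{uN} T) (s : LRState g) (X : Symbol T g.NT) : LRState g :=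
  {d | Closure g {d' | ∃ A α β, (A, α, X :: β) ∈ s ∧ d' = (A, α ++ [X], β)} d}

/-- The start state `s₀` of `M(G)`: the closure of `{S' → · S}`. -/
def start (g : ContextFreeGrammar.{uN} T) : LRState g :=
  {d | Closure g {(none, [], [Symbol.nonterminal g.initial])} d}

/-- The dotted rule `S' → S ·`. -/
def finalDR (g : ContextFreeGrammar.{uN} T) : DottedRule g :=
  (none, [Symbol.nonterminal g.initial], [])

/-- A state is final iff it contains `S' → S ·`. -/
def IsFinal (g : ContextFreeGrammar.{uN} T) (s : LRState g) : Prop := finalDR g ∈ s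

/-- Iterated transition function, extended to strings of symbols. -/
def nextStar (g : ContextFreeGrammar.{uN} T) (s : LRState g)
    (α : List (Symbol T g.NT)) : LRState g :=
  α.foldl (next g) s

/-- A stack of the shift-reduce recognizer: a sequence of (state, symbol) pairs. -/
abbrev Stack (g : ContextFreeGrammar.{uN} T) : Type _ :=
  List (LRState g × Symbol T g.NT)

/-- `Stacks g s σ` iff `σ = ⟨q₀,X₀⟩…⟨q_k,X_k⟩` with `q₀ = s₀`,
`q_i = δ(q_{i-1},X_{i-1})` and `s = δ(q_k,X_k)`; in addition `Stacks s₀`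
contains the empty sequence. -/
inductive Stacks (g : ContextFreeGrammar.{uN} T) : LRState g → Stack g → Prop
  | nil : Stacks g (start g) []
  | snoc {q : LRState g} {σ : Stack g} {X : Symbol T g.NT} :
      Stacks g q σ → next g q X ≠ ∅ → Stacks g (next g q X) (σ ++ [(q, X)])

/-- A configuration `⟨s, σ, w⟩` of the shift-reduce recognizer `R(G)`. -/
structure Cfg (g : ContextFreeGrammar.{uN} T) where
  state : LRState g
  stack : Stack g
  input : List T

/-- A shift move of `R(G)`. -/
inductive ShiftStep (g : ContextFreeGrammar.{uN} T) : Cfg g → Cfg g → Prop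
  | shift {s : LRState g} {σ : Stack g} {x : T} {w : List T} :
      next g s (Symbol.terminal x) ≠ ∅ →
      ShiftStep g ⟨s, σ, x :: w⟩
        ⟨next g s (Symbol.terminal x), σ ++ [(s, Symbol.terminal x)], w⟩

/-- A reduce move of `R(G)`. -/
inductive ReduceStep (g : ContextFreeGrammar.{uN} T) : Cfg g → Cfg g → Prop
  | empty {s : LRState g} {σ : Stack g} {w : List T} {A : g.NT} :
      (some A, ([] : List (Symbol T g.NT)), ([] : List (Symbol T g.NT))) ∈ s →
      next g s (Symbol.nonterminal A) ≠ ∅ →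
      ReduceStep g ⟨s, σ, w⟩
        ⟨next g s (Symbol.nonterminal A), σ ++ [(s, Symbol.nonterminal A)], w⟩
  | pop {s : LRState g} {σ τ : Stack g} {w : List T} {A : g.NT}
      {s₁ : LRState g} {X₁ : Symbol T g.NT} :
      (some A, ((s₁, X₁) :: τ).map Prod.snd, ([] : List (Symbol T g.NT))) ∈ s →
      next g s₁ (Symbol.nonterminal A) ≠ ∅ →
      ReduceStep g ⟨s, σ ++ (s₁, X₁) :: τ, w⟩
        ⟨next g s₁ (Symbol.nonterminal A), σ ++ [(s₁, Symbol.nonterminal A)], w⟩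

/-- A move of the shift-reduce recognizer `R(G)`. -/
def Step (g : ContextFreeGrammar.{uN} T) (c c' : Cfg g) : Prop :=
  ShiftStep g c c' ∨ ReduceStep g c c'

/-- `R(G)` accepts `w`: some sequence of moves leads from the initial
configuration `⟨s₀, ε, w⟩` to a final configuration `⟨s, ⟨s₀,S⟩, ε⟩`, `s ∈ F`. -/
def RAccepts (g : ContextFreeGrammar.{uN} T) (w : List T) : Prop :=
  ∃ s : LRState g, IsFinal g s ∧
    Relation.ReflTransGen (Step g) ⟨start g, [], w⟩
      ⟨s, [(start g, Symbol.nonterminal g.initial)], []⟩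

/-- A stack congruence on `R(G)`: a family of equivalence relations on
`Stacks(s)`, compatible with pushing. -/
def IsStackCongruence (g : ContextFreeGrammar.{uN} T)
    (E : LRState g → Stack g → Stack g → Prop) : Prop :=
  (∀ s σ σ', E s σ σ' → Stacks g s σ ∧ Stacks g s σ') ∧
  (∀ s σ, Stacks g s σ → E s σ σ) ∧
  (∀ s σ σ', E s σ σ' → E s σ' σ) ∧
  (∀ s σ₁ σ₂ σ₃, E s σ₁ σ₂ → E s σ₂ σ₃ → E s σ₁ σ₃) ∧
  (∀ s X σ σ', next g s X ≠ ∅ → E s σ σ' →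
    E (next g s X) (σ ++ [(s, X)]) (σ' ++ [(s, X)]))

/-- A state of the unfolded recognizer `R_≡`: a state of `M(G)` together with
an equivalence class of stacks (represented as a set of stacks). -/
abbrev UState (g : ContextFreeGrammar.{uN} T) : Type _ := LRState g × Set (Stack g)

/-- Transition function `δ_≡` of the unfolded recognizer:
`δ_≡(⟨s,[σ]⟩, X) = ⟨δ(s,X), [σ⟨s,X⟩]⟩`. -/
def uNext (g : ContextFreeGrammar.{uN} T) (E : LRState g → Stack g → Stack g → Prop)
    (p : UState g) (X : Symbol T g.NT) : UState g :=
  (next g p.1 X,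
   {τ | Stacks g (next g p.1 X) τ ∧ ∃ σ ∈ p.2, E (next g p.1 X) τ (σ ++ [(p.1, X)])})

/-- Start state `⟨s₀, [ε]⟩` of the unfolded recognizer. -/
def uStart (g : ContextFreeGrammar.{uN} T)
    (E : LRState g → Stack g → Stack g → Prop) : UState g :=
  (start g, {τ | Stacks g (start g) τ ∧ E (start g) τ []})

/-- Genuine states of the unfolded recognizer: pairs `⟨s, [σ]_s⟩` with
`σ ∈ Stacks(s)`. -/
def IsUState (g : ContextFreeGrammar.{uN} T)
    (E : LRState g → Stack g → Stack g → Prop) (p : UState g) : Prop :=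
  ∃ σ, Stacks g p.1 σ ∧ p.2 = {τ | Stacks g p.1 τ ∧ E p.1 τ σ}

/-- Iterated `δ_≡`, extended to strings of symbols. -/
def uNextStar (g : ContextFreeGrammar.{uN} T)
    (E : LRState g → Stack g → Stack g → Prop)
    (p : UState g) (α : List (Symbol T g.NT)) : UState g :=
  α.foldl (uNext g E) p

/-- A configuration of the unfolded recognizer `R_≡`. -/
structure UCfg (g : ContextFreeGrammar.{uN} T) where
  state : UState g
  stack : List (UState g × Symbol T g.NT)
  input : List T

/-- A shift move of the unfolded recognizer. -/
inductive UShiftStep (g : ContextFreeGrammar.{uN} T)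
    (E : LRState g → Stack g → Stack g → Prop) : UCfg g → UCfg g → Prop
  | shift {p : UState g} {σ : List (UState g × Symbol T g.NT)} {x : T} {w : List T} :
      next g p.1 (Symbol.terminal x) ≠ ∅ →
      UShiftStep g E ⟨p, σ, x :: w⟩
        ⟨uNext g E p (Symbol.terminal x), σ ++ [(p, Symbol.terminal x)], w⟩

/-- A reduce move of the unfolded recognizer. -/
inductive UReduceStep (g : ContextFreeGrammar.{uN} T)
    (E : LRState g → Stack g → Stack g → Prop) : UCfg g → UCfg g → Prop
  | empty {p : UState g} {σ : List (UState g × Symbol T g.NT)} {w : List T} {A : g.NT} :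
      (some A, ([] : List (Symbol T g.NT)), ([] : List (Symbol T g.NT))) ∈ p.1 →
      next g p.1 (Symbol.nonterminal A) ≠ ∅ →
      UReduceStep g E ⟨p, σ, w⟩
        ⟨uNext g E p (Symbol.nonterminal A), σ ++ [(p, Symbol.nonterminal A)], w⟩
  | pop {p : UState g} {σ τ : List (UState g × Symbol T g.NT)} {w : List T} {A : g.NT}
      {p₁ : UState g} {X₁ : Symbol T g.NT} :
      (some A, ((p₁, X₁) :: τ).map Prod.snd, ([] : List (Symbol T g.NT))) ∈ p.1 →
      next g p₁.1 (Symbol.nonterminal A) ≠ ∅ →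
      UReduceStep g E ⟨p, σ ++ (p₁, X₁) :: τ, w⟩
        ⟨uNext g E p₁ (Symbol.nonterminal A), σ ++ [(p₁, Symbol.nonterminal A)], w⟩

/-- A move of the unfolded recognizer `R_≡`. -/
def UStep (g : ContextFreeGrammar.{uN} T)
    (E : LRState g → Stack g → Stack g → Prop) (c c' : UCfg g) : Prop :=
  UShiftStep g E c c' ∨ UReduceStep g E c c'

/-- The unfolded recognizer `R_≡` accepts `w`. -/
def UAccepts (g : ContextFreeGrammar.{uN} T)
    (E : LRState g → Stack g → Stack g → Prop) (w : List T) : Prop :=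
  ∃ p : UState g, IsFinal g p.1 ∧
    Relation.ReflTransGen (UStep g E) ⟨uStart g E, [], w⟩
      ⟨p, [(uStart g E, Symbol.nonterminal g.initial)], []⟩

/-- `Pop(p)`: the unfolded states reachable from `p` by a reduction. -/
def PopSet (g : ContextFreeGrammar.{uN} T)
    (E : LRState g → Stack g → Stack g → Prop) (p : UState g) : Set (UState g) :=
  {p' | ∃ (A : g.NT) (α : List (Symbol T g.NT)) (p'' : UState g),
    IsUState g E p'' ∧
    (some A, α, ([] : List (Symbol T g.NT))) ∈ p.1 ∧
    (some A, ([] : List (Symbol T g.NT)), α) ∈ p''.1 ∧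
    uNextStar g E p'' α = p ∧
    next g p''.1 (Symbol.nonterminal A) ≠ ∅ ∧
    uNext g E p'' (Symbol.nonterminal A) = p'}

/-- Paths in the flattening `F_≡` of the unfolded recognizer: terminal
transitions follow `δ_≡` and reductions become ε-transitions. -/
inductive FPath (g : ContextFreeGrammar.{uN} T)
    (E : LRState g → Stack g → Stack g → Prop) : UState g → List T → UState g → Prop
  | refl (p : UState g) : FPath g E p [] p
  | shift {p : UState g} {x : T} {w : List T} {q : UState g} :
      next g p.1 (Symbol.terminal x) ≠ ∅ →
      FPath g E (uNext g E p (Symbol.terminal x)) w q → FPath g E p (x :: w) q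
  | eps {p p' : UState g} {w : List T} {q : UState g} :
      p' ∈ PopSet g E p → FPath g E p' w q → FPath g E p w q

/-- The flattening `F_≡` accepts `w`. -/
def FAccepts (g : ContextFreeGrammar.{uN} T)
    (E : LRState g → Stack g → Stack g → Prop) (w : List T) : Prop :=
  ∃ q : UState g, IsFinal g q.1 ∧ FPath g E (uStart g E) w q

/-- A stack `⟨s₁,X₁⟩…⟨s_k,X_k⟩` is a loop if `δ(s_k,X_k) = s₁`. -/
def IsLoop (g : ContextFreeGrammar.{uN} T) (τ : Stack g) : Prop :=
  ∃ p q : LRState g × Symbol T g.NT,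
    τ.head? = some p ∧ τ.getLast? = some q ∧ next g q.1 q.2 = p.1

/-- A loop is minimal if no proper prefix of it is a loop. -/
def IsMinimalLoop (g : ContextFreeGrammar.{uN} T) (τ : Stack g) : Prop :=
  IsLoop g τ ∧ ∀ τ' : Stack g, τ' <+: τ → τ' ≠ τ → ¬ IsLoop g τ'

/-- A stack is collapsible if it contains a loop as a contiguous segment. -/
def Collapsible (g : ContextFreeGrammar.{uN} T) (σ : Stack g) : Prop :=
  ∃ ρ τ υ : Stack g, σ = ρ ++ τ ++ υ ∧ IsLoop g τ

/-- `σ` immediately collapses to `σ'`: remove the earliest minimal loop. -/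
def ImmediatelyCollapses (g : ContextFreeGrammar.{uN} T) (σ σ' : Stack g) : Prop :=
  ∃ ρ τ υ : Stack g, σ = ρ ++ τ ++ υ ∧ σ' = ρ ++ υ ∧ IsMinimalLoop g τ ∧
    ¬ ∃ ρ' τ' υ' : Stack g, σ = ρ' ++ τ' ++ υ' ∧ ρ' <+: ρ ∧ ρ' ≠ ρ ∧ IsLoop g τ'

/-- `σ` collapses to `σ'` by finitely many immediate collapses. -/
def Collapses (g : ContextFreeGrammar.{uN} T) : Stack g → Stack g → Prop :=
  Relation.ReflTransGen (ImmediatelyCollapses g)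

/-- Two stacks are collapsing-equivalent if they collapse to the same
uncollapsible stack. -/
def CollEquiv (g : ContextFreeGrammar.{uN} T) (σ σ' : Stack g) : Prop :=
  ∃ τ : Stack g, ¬ Collapsible g τ ∧ Collapses g σ τ ∧ Collapses g σ' τ

/-- The collapsing congruence: the restriction of collapsing equivalence to
the sets `Stacks(s)`. -/
def CollCong (g : ContextFreeGrammar.{uN} T) (s : LRState g) (σ σ' : Stack g) : Prop :=
  Stacks g s σ ∧ Stacks g s σ' ∧ CollEquiv g σ σ'

/-- A CFG is left-linear if every rule has the form `A → Bβ` or `A → β`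
with `β` a string of terminals. -/
def LeftLinear (g : ContextFreeGrammar.{uN} T) : Prop :=
  ∀ r ∈ g.rules, (∃ β : List T, r.output = β.map Symbol.terminal) ∨
    (∃ (B : g.NT) (β : List T), r.output = Symbol.nonterminal B :: β.map Symbol.terminal)

/-- A CFG is right-linear if every rule has the form `A → βB` or `A → β`
with `β` a string of terminals. -/
def RightLinear (g : ContextFreeGrammar.{uN} T) : Prop :=
  ∀ r ∈ g.rules, (∃ β : List T, r.output = β.map Symbol.terminal) ∨
    (∃ (B : g.NT) (β : List T), r.output = β.map Symbol.terminal ++ [Symbol.nonterminal B])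

/-- Reachable (genuine) states of `M(G)`. -/
def ReachableState (g : ContextFreeGrammar.{uN} T) (s : LRState g) : Prop :=
  s ≠ ∅ ∧ ∃ α : List (Symbol T g.NT), nextStar g (start g) α = s

end LRApprox

open LRApprox


section AuxSound

variable {T : Type*} {g : LRApprox.ContextFreeGrammar T}

/-- Parse-tree style generation predicate: `GenStrA g γ w` means the symbol
string `γ` derives the terminal string `w`, built compositionally. -/
inductive GenStrA (g : LRApprox.ContextFreeGrammar T) : List (Symbol T g.NT) → List T → Prop
  | nil : GenStrA g [] []
  | consTerm {γ : List (Symbol T g.NT)} {w : List T} (x : T) :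
      GenStrA g γ w → GenStrA g (Symbol.terminal x :: γ) (x :: w)
  | consNT {γ : List (Symbol T g.NT)} {u v : List T}
      (r : ContextFreeRule T g.NT) (hr : r ∈ g.rules) :
      GenStrA g r.output u → GenStrA g γ v →
      GenStrA g (Symbol.nonterminal r.input :: γ) (u ++ v)

lemma genStrA_append {α β : List (Symbol T g.NT)} {u v : List T}
    (hu : GenStrA g α u) (hv : GenStrA g β v) : GenStrA g (α ++ β) (u ++ v) := by
  induction hu with
  | nil => simpa using hv
  | consTerm x h ih => exact GenStrA.consTerm x ih
  | consNT r hr h1 h2 ih1 ih2 =>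
    rw [List.cons_append, List.append_assoc]
    exact GenStrA.consNT r hr h1 ih2

lemma genStrA_split {δ : List (Symbol T g.NT)} {w : List T} (h : GenStrA g δ w) :
    ∀ α β : List (Symbol T g.NT), δ = α ++ β →
      ∃ u v : List T, w = u ++ v ∧ GenStrA g α u ∧ GenStrA g β v := by
  induction h with
  | nil =>
    rintro α β h
    obtain ⟨rfl, rfl⟩ := List.append_eq_nil_iff.mp h.symm
    exact ⟨[], [], rfl, GenStrA.nil, GenStrA.nil⟩
  | consTerm x h ih =>
    rintro α β hαβ
    match α, hαβ with
    | [], hh =>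
      rw [List.nil_append] at hh
      exact ⟨[], _, rfl, GenStrA.nil, hh ▸ GenStrA.consTerm x h⟩
    | (a :: α'), hh =>
      simp only [List.cons_append, List.cons.injEq] at hh
      obtain ⟨rfl, hγ⟩ := hh
      obtain ⟨u, v, rfl, hu, hv⟩ := ih α' β hγ
      exact ⟨x :: u, v, rfl, GenStrA.consTerm x hu, hv⟩
  | consNT r hr h1 h2 ih1 ih2 =>
    rintro α β hαβ
    match α, hαβ with
    | [], hh =>
      rw [List.nil_append] at hh
      exact ⟨[], _, rfl, GenStrA.nil, hh ▸ GenStrA.consNT r hr h1 h2⟩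
    | (a :: α'), hh =>
      simp only [List.cons_append, List.cons.injEq] at hh
      obtain ⟨rfl, hγ⟩ := hh
      obtain ⟨u', v', rfl, hu', hv'⟩ := ih2 α' β hγ
      exact ⟨_ ++ u', v', (List.append_assoc _ _ _).symm,
        GenStrA.consNT r hr h1 hu', hv'⟩

lemma genStrA_terminal (w : List T) : GenStrA g (w.map Symbol.terminal) w := by
  induction w with
  | nil => exact GenStrA.nil
  | cons x w ih => exact GenStrA.consTerm x ih

lemma derives_genStrA {w : List T} {δ : List (Symbol T g.NT)}
    (h : g.Derives δ (w.map Symbol.terminal)) : GenStrA g δ w := by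
  induction h using Relation.ReflTransGen.head_induction_on with
  | refl => exact genStrA_terminal w
  | head hstep _ ih =>
    obtain ⟨r, hr, hrw⟩ := hstep
    obtain ⟨p, q, hpq, hout⟩ := hrw.exists_parts
    subst hpq
    rw [hout, List.append_assoc] at ih
    obtain ⟨u, v, rfl, hu, hv⟩ := genStrA_split ih p (r.output ++ q) rfl
    obtain ⟨u1, v1, rfl, hu1, hv1⟩ := genStrA_split hv r.output q rfl
    have h2 := genStrA_append hu (GenStrA.consNT r hr hu1 hv1)
    simpa [List.append_assoc] using h2

attribute [local instance] Classical.propDecidable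

/-- A state that is a closure set is closed under `Closure`. -/
lemma closure_closed {R : Set (DottedRule g)} {d : DottedRule g}
    (h : Closure g {d' | Closure g R d'} d) : Closure g R d := by
  induction h with
  | base hd => exact hd
  | step r h hr hin ih => exact Closure.step r ih hr hin

/-- Goodness of an unfolded state: genuine and with closed first component. -/
def UGoodA (g : LRApprox.ContextFreeGrammar T) (E : LRState g → Stack g → Stack g → Prop)
    (p : UState g) : Prop :=
  IsUState g E p ∧ ∀ d : DottedRule g, Closure g p.1 d → d ∈ p.1

lemma ne_empty_of_mem_next {s : LRState g} {X : Symbol T g.NT}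
    {A : Option g.NT} {α β : List (Symbol T g.NT)}
    (h : (A, α, X :: β) ∈ s) : next g s X ≠ ∅ := by
  apply Set.nonempty_iff_ne_empty.mp
  exact ⟨(A, α ++ [X], β), Closure.base ⟨A, α, β, h, rfl⟩⟩

lemma mem_next_of_mem {s : LRState g} {X : Symbol T g.NT}
    {A : Option g.NT} {α β : List (Symbol T g.NT)}
    (h : (A, α, X :: β) ∈ s) : (A, α ++ [X], β) ∈ next g s X :=
  Closure.base ⟨A, α, β, h, rfl⟩

lemma uGoodA_uNext {E : LRState g → Stack g → Stack g → Prop}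
    (hE : IsStackCongruence g E) {p : UState g} {X : Symbol T g.NT}
    (hp : UGoodA g E p) (hne : next g p.1 X ≠ ∅) :
    UGoodA g E (uNext g E p X) := by
  obtain ⟨⟨σ, hσ, hset⟩, hclosed⟩ := hp
  obtain ⟨hstk, hrefl, hsymm, htrans, hpush⟩ := hE
  constructor
  · refine ⟨σ ++ [(p.1, X)], Stacks.snoc hσ hne, ?_⟩
    ext τ
    constructor
    · rintro ⟨hτ, σ₀, hσ₀, hEτ⟩
      rw [hset] at hσ₀
      exact ⟨hτ, htrans _ _ _ _ hEτ (hpush _ X _ _ hne hσ₀.2)⟩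
    · rintro ⟨hτ, hEτ⟩
      refine ⟨hτ, σ, ?_, hEτ⟩
      rw [hset]
      exact ⟨hσ, hrefl _ _ hσ⟩
  · intro d hd
    exact closure_closed hd

lemma uGoodA_uStart {E : LRState g → Stack g → Stack g → Prop}
    (hE : IsStackCongruence g E) : UGoodA g E (uStart g E) :=
  ⟨⟨[], Stacks.nil, rfl⟩, fun _ hd => closure_closed hd⟩

lemma fPath_trans {E : LRState g → Stack g → Stack g → Prop}
    {p q t : UState g} {u v : List T}
    (h1 : FPath g E p u q) (h2 : FPath g E q v t) : FPath g E p (u ++ v) t := by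
  induction h1 with
  | refl _ => exact h2
  | shift hne _ ih => exact FPath.shift hne (ih h2)
  | eps hpop _ ih => exact FPath.eps hpop (ih h2)

/-- Main induction: walking the dots along a parsed string, producing a
flattening path. -/
lemma fPath_of_genStrA {E : LRState g → Stack g → Stack g → Prop}
    (hE : IsStackCongruence g E) {δ : List (Symbol T g.NT)} {w : List T}
    (h : GenStrA g δ w) :
    ∀ (p : UState g) (A : Option g.NT) (α : List (Symbol T g.NT)),
      UGoodA g E p → (A, α, δ) ∈ p.1 →
      FPath g E p w (uNextStar g E p δ) ∧
      UGoodA g E (uNextStar g E p δ) ∧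
      (A, α ++ δ, ([] : List (Symbol T g.NT))) ∈ (uNextStar g E p δ).1 := by
  induction h with
  | nil =>
    intro p A α hp hmem
    exact ⟨FPath.refl p, hp, by simpa [uNextStar] using hmem⟩
  | consTerm x h ih =>
    intro p A α hp hmem
    have hne : next g p.1 (Symbol.terminal x) ≠ ∅ := ne_empty_of_mem_next hmem
    have hp' : UGoodA g E (uNext g E p (Symbol.terminal x)) := uGoodA_uNext hE hp hne
    have hmem' : (A, α ++ [Symbol.terminal x], _) ∈ (uNext g E p (Symbol.terminal x)).1 :=
      mem_next_of_mem hmem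
    obtain ⟨hpath, hgood, hmem''⟩ := ih (uNext g E p (Symbol.terminal x)) A
      (α ++ [Symbol.terminal x]) hp' hmem'
    refine ⟨FPath.shift hne hpath, hgood, ?_⟩
    simpa [List.append_assoc, uNextStar] using hmem''
  | consNT r hr h1 h2 ih1 ih2 =>
    intro p A α hp hmem
    have hne : next g p.1 (Symbol.nonterminal r.input) ≠ ∅ := ne_empty_of_mem_next hmem
    have hrule : (some r.input, ([] : List (Symbol T g.NT)), r.output) ∈ p.1 :=
      hp.2 _ (Closure.step r (Closure.base hmem) hr rfl)
    obtain ⟨hpath1, hgood1, hmem1⟩ := ih1 p (some r.input) [] hp hrule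
    have hmem1' : (some r.input, r.output, ([] : List (Symbol T g.NT)))
        ∈ (uNextStar g E p r.output).1 := by simpa using hmem1
    have hpop : uNext g E p (Symbol.nonterminal r.input)
        ∈ PopSet g E (uNextStar g E p r.output) :=
      ⟨r.input, r.output, p, hp.1, hmem1', hrule, rfl, hne, rfl⟩
    have hp' : UGoodA g E (uNext g E p (Symbol.nonterminal r.input)) :=
      uGoodA_uNext hE hp hne
    have hmem' : (A, α ++ [Symbol.nonterminal r.input], _)
        ∈ (uNext g E p (Symbol.nonterminal r.input)).1 := mem_next_of_mem hmem
    obtain ⟨hpath2, hgood2, hmem''⟩ := ih2 (uNext g E p (Symbol.nonterminal r.input)) A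
      (α ++ [Symbol.nonterminal r.input]) hp' hmem'
    refine ⟨fPath_trans hpath1 (FPath.eps hpop hpath2), hgood2, ?_⟩
    simpa [List.append_assoc, uNextStar] using hmem''

end AuxSound


/-- For any CFG `G` and any stack congruence `≡` on the
canonical LR(0) shift-reduce recognizer `R(G)`, `L(G) ⊆ L(F_≡(G))`, where
`F_≡(G)` is the flattening of the unfolded recognizer `R(G)_≡`. -/
theorem flattening_is_sound {T : Type*} (g : LRApprox.ContextFreeGrammar T)
    (E : LRState g → Stack g → Stack g → Prop)
    (hE : IsStackCongruence g E) :
    ∀ w ∈ g.language, FAccepts g E w := by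
  intro w hw
  change g.Derives [Symbol.nonterminal g.initial] (w.map Symbol.terminal) at hw
  have hgen : GenStrA g [Symbol.nonterminal g.initial] w := derives_genStrA hw
  have hmem0 : ((none : Option g.NT), ([] : List (Symbol T g.NT)),
      [Symbol.nonterminal g.initial]) ∈ (uStart g E).1 := Closure.base rfl
  obtain ⟨hpath, _, hmem⟩ :=
    fPath_of_genStrA hE hgen (uStart g E) none [] (uGoodA_uStart hE) hmem0
  exact ⟨_, by simpa [IsFinal, finalDR] using hmem, hpath⟩
end

section
/- Let G be a left-linear context-free grammar and let F be the FSA derived from G by the basic approximation algorithm, i.e., the flattening F_≡ of the recognizer R(G) unfolded by the collapsing stack congruence. Then L(G) = L(F). -/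
open LRApprox

namespace LRApprox

universe uN' uT'

variable {T : Type uT'} {g : ContextFreeGrammar.{uN'} T}
variable {E : LRState g → Stack g → Stack g → Prop}

lemma ContextFreeGrammar.Derives.refl (w : List (Symbol T g.NT)) : g.Derives w w :=
  Relation.ReflTransGen.refl

lemma ContextFreeGrammar.Derives.trans_produces {u v w : List (Symbol T g.NT)}
    (huv : g.Derives u v) (hvw : g.Produces v w) : g.Derives u w :=
  Relation.ReflTransGen.tail huv hvw

lemma ContextFreeGrammar.mem_language_iff (w : List T) :
    w ∈ g.language ↔ g.Derives [Symbol.nonterminal g.initial] (w.map Symbol.terminal) :=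
  Iff.rfl

/-- The canonical LR state reached by the symbol string `α`. -/
def stateOf (g : ContextFreeGrammar.{uN'} T) (α : List (Symbol T g.NT)) : LRState g :=
  {d | ∃ A β, d = (A, α, β) ∧ (A, ([] : List (Symbol T g.NT)), α ++ β) ∈ start g}

lemma mem_start_elim {d : DottedRule g} (h : d ∈ start g) :
    d = (none, [], [Symbol.nonterminal g.initial]) ∨
      ∃ r ∈ g.rules, d = (some r.input, [], r.output) := by
  have h' : Closure g {(none, [], [Symbol.nonterminal g.initial])} d := h
  induction h' with
  | base hd => left; simpa using hd
  | step r hcl hr hin ih => right; exact ⟨r, hr, by rw [hin]⟩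

lemma nt_not_mem_map_terminal {B : g.NT} {u : List T}
    (h : Symbol.nonterminal B ∈ u.map (Symbol.terminal : T → Symbol T g.NT)) : False := by
  simp [List.mem_map] at h

lemma key_no_nt (hg : LeftLinear g) {A : Option g.NT} {δ β : List (Symbol T g.NT)}
    {X : Symbol T g.NT} {C : g.NT}
    (h : (A, ([] : List (Symbol T g.NT)), δ ++ X :: Symbol.nonterminal C :: β) ∈ start g) :
    False := by
  rcases mem_start_elim h with h1 | ⟨r, hr, h2⟩
  · have h3 : δ ++ X :: Symbol.nonterminal C :: β = [Symbol.nonterminal g.initial] := by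
      simpa using congrArg (fun d => d.2.2) h1
    have h4 := congrArg List.length h3
    simp [List.length_append] at h4
    omega
  · have h3 : δ ++ X :: Symbol.nonterminal C :: β = r.output := by
      simpa using congrArg (fun d => d.2.2) h2
    rcases hg r hr with ⟨u, hu⟩ | ⟨B, u, hu⟩
    · have hC : Symbol.nonterminal C ∈ u.map (Symbol.terminal : T → Symbol T g.NT) := by
        rw [← hu, ← h3]; simp
      exact nt_not_mem_map_terminal hC
    · rw [hu] at h3
      cases δ with
      | nil =>
        simp only [List.nil_append] at h3
        obtain ⟨-, h4⟩ := List.cons.inj h3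
        have hC : Symbol.nonterminal C ∈ u.map (Symbol.terminal : T → Symbol T g.NT) := by
          rw [← h4]; simp
        exact nt_not_mem_map_terminal hC
      | cons d δ' =>
        simp only [List.cons_append] at h3
        obtain ⟨-, h4⟩ := List.cons.inj h3
        have hC : Symbol.nonterminal C ∈ u.map (Symbol.terminal : T → Symbol T g.NT) := by
          rw [← h4]; simp
        exact nt_not_mem_map_terminal hC

lemma closure_subset {R : Set (DottedRule g)}
    (hR : ∀ (A : Option g.NT) (α : List (Symbol T g.NT)) (C : g.NT)
      (β : List (Symbol T g.NT)), (A, α, Symbol.nonterminal C :: β) ∈ R → False)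
    {d : DottedRule g} (h : Closure g R d) : d ∈ R := by
  induction h with
  | base hd => exact hd
  | step r hcl hr hin ih => exact absurd ih (fun hm => hR _ _ _ _ hm)

lemma stateOf_nil : stateOf g [] = start g := by
  ext d
  constructor
  · rintro ⟨A, β, rfl, h⟩; simpa using h
  · intro h
    rcases mem_start_elim h with h1 | ⟨r, hr, h2⟩
    · exact ⟨none, [Symbol.nonterminal g.initial], h1, by simpa using h1 ▸ h⟩
    · exact ⟨some r.input, r.output, h2, by simpa using h2 ▸ h⟩

lemma next_stateOf (hg : LeftLinear g) (γ : List (Symbol T g.NT)) (X : Symbol T g.NT) :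
    next g (stateOf g γ) X = stateOf g (γ ++ [X]) := by
  ext d
  constructor
  · intro h
    have h' := closure_subset (R := {d' | ∃ A α β, (A, α, X :: β) ∈ stateOf g γ ∧
        d' = (A, α ++ [X], β)}) ?_ h
    · obtain ⟨A, α, β, hmem, rfl⟩ := h'
      obtain ⟨A', β', heq, hst⟩ := hmem
      simp only [Prod.mk.injEq] at heq
      obtain ⟨rfl, rfl, rfl⟩ := heq
      exact ⟨A, β, rfl, by simpa [List.append_assoc] using hst⟩
    · rintro A α C β ⟨A₀, α₀, β₀, hmem, heq⟩
      obtain ⟨A₁, β₁, heq', hst⟩ := hmem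
      simp only [Prod.mk.injEq] at heq heq'
      obtain ⟨-, h1, h2⟩ := heq'
      obtain ⟨-, -, h3⟩ := heq
      rw [← h2, ← h3] at hst
      subst h1
      exact key_no_nt hg hst
  · rintro ⟨A, β, rfl, hst⟩
    exact Closure.base ⟨A, γ, β, ⟨A, X :: β, rfl, by simpa [List.append_assoc] using hst⟩, rfl⟩

lemma nextStar_snoc (s : LRState g) (α : List (Symbol T g.NT)) (X : Symbol T g.NT) :
    nextStar g s (α ++ [X]) = next g (nextStar g s α) X := by
  simp [nextStar]

lemma nextStar_start_eq (hg : LeftLinear g) (α : List (Symbol T g.NT)) :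
    nextStar g (start g) α = stateOf g α := by
  induction α using List.reverseRecOn with
  | nil => exact stateOf_nil.symm
  | append_singleton γ X ih => rw [nextStar_snoc, ih, next_stateOf hg]

lemma uNextStar_fst (p : UState g) (α : List (Symbol T g.NT)) :
    (uNextStar g E p α).1 = nextStar g p.1 α := by
  induction α generalizing p with
  | nil => rfl
  | cons X α ih => exact ih (uNext g E p X)

lemma uNextStar_snoc (p : UState g) (α : List (Symbol T g.NT)) (X : Symbol T g.NT) :
    uNextStar g E p (α ++ [X]) = uNext g E (uNextStar g E p α) X := by
  simp [uNextStar]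

lemma next_ne_empty_of_mem {s : LRState g} {A : Option g.NT}
    {α β : List (Symbol T g.NT)} {X : Symbol T g.NT} (h : (A, α, X :: β) ∈ s) :
    next g s X ≠ ∅ := by
  intro he
  have hm : (A, α ++ [X], β) ∈ next g s X := Closure.base ⟨A, α, β, h, rfl⟩
  rw [he] at hm
  exact hm

lemma mem_uNextStar_start (hg : LeftLinear g) {A : Option g.NT}
    {γ β : List (Symbol T g.NT)}
    (h : (A, ([] : List (Symbol T g.NT)), γ ++ β) ∈ start g) :
    (A, γ, β) ∈ (uNextStar g E (uStart g E) γ).1 := by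
  rw [uNextStar_fst, show (uStart g E).1 = start g from rfl, nextStar_start_eq hg]
  exact ⟨A, β, rfl, h⟩

lemma stacks_state_eq {s : LRState g} {σ : Stack g} (h : Stacks g s σ) :
    s = nextStar g (start g) (σ.map Prod.snd) := by
  induction h with
  | nil => rfl
  | @snoc q σ X hσ hne ih =>
    rw [List.map_append]
    simp only [List.map_cons, List.map_nil]
    rw [nextStar_snoc, ← ih]

/-- Machine-side semantic acceptance predicate. -/
inductive MAcc (g : ContextFreeGrammar.{uN'} T) : List (Symbol T g.NT) → List T → Prop
  | fin : MAcc g [Symbol.nonterminal g.initial] []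
  | shift {α : List (Symbol T g.NT)} {x : T} {w : List T} :
      MAcc g (α ++ [Symbol.terminal x]) w → MAcc g α (x :: w)
  | reduce {A : g.NT} {γ : List (Symbol T g.NT)} {w : List T} :
      (some A, ([] : List (Symbol T g.NT)), γ) ∈ start g →
      MAcc g [Symbol.nonterminal A] w → MAcc g γ w

lemma macc_derives {α : List (Symbol T g.NT)} {w : List T} (h : MAcc g α w) :
    g.Derives [Symbol.nonterminal g.initial] (α ++ w.map Symbol.terminal) := by
  induction h with
  | fin => simpa using ContextFreeGrammar.Derives.refl _
  | shift h ih => simpa using ih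
  | @reduce A γ w hmem h ih =>
    rcases mem_start_elim hmem with h1 | ⟨r, hr, h2⟩
    · simp at h1
    · simp only [Prod.mk.injEq, Option.some.injEq] at h2
      obtain ⟨rfl, -, rfl⟩ := h2
      exact ih.trans_produces ⟨r, hr, ContextFreeRule.Rewrites.head _⟩

lemma fpath_macc (hg : LeftLinear g) {p : UState g} {w : List T} {q : UState g}
    (h : FPath g E p w q) :
    IsFinal g q.1 → ∀ α : List (Symbol T g.NT),
      p = uNextStar g E (uStart g E) α → MAcc g α w := by
  induction h with
  | refl p =>
    intro hq α hα
    subst hα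
    rw [IsFinal, uNextStar_fst, show (uStart g E).1 = start g from rfl,
      nextStar_start_eq hg] at hq
    obtain ⟨A, β, he, -⟩ := hq
    rw [finalDR] at he
    simp only [Prod.mk.injEq] at he
    obtain ⟨-, h2, -⟩ := he
    rw [← h2]
    exact MAcc.fin
  | @shift p x w q hne hp ih =>
    intro hq α hα
    exact MAcc.shift (ih hq (α ++ [Symbol.terminal x]) (by rw [uNextStar_snoc, ← hα]))
  | @eps p p' w q hpop hp ih =>
    intro hq α hα
    obtain ⟨A, α', p'', ⟨σ, hσ, hcls⟩, hmemp, hmemp'', hstar, hne, hnext⟩ := hpop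
    have h1 : p''.1 = stateOf g (σ.map Prod.snd) :=
      (stacks_state_eq hσ).trans (nextStar_start_eq hg _)
    rw [h1] at hmemp''
    obtain ⟨A₀, β₀, heq, hst⟩ := hmemp''
    simp only [Prod.mk.injEq] at heq
    obtain ⟨rfl, h2, rfl⟩ := heq
    have hσnil : σ = [] := by
      rcases σ with _ | _
      · rfl
      · exact absurd h2.symm (by simp)
    subst hσnil
    simp only [List.map_nil] at h1
    rw [stateOf_nil] at h1
    have hp'' : p'' = uStart g E := by
      rw [Prod.ext_iff]
      refine ⟨h1, ?_⟩
      rw [hcls, h1]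
      rfl
    -- identify α' with α
    have hmemp' : (some A, α', ([] : List (Symbol T g.NT))) ∈ stateOf g α := by
      rw [hα, uNextStar_fst, show (uStart g E).1 = start g from rfl,
        nextStar_start_eq hg] at hmemp
      exact hmemp
    obtain ⟨A₁, β₁, heq1, -⟩ := hmemp'
    simp only [Prod.mk.injEq] at heq1
    obtain ⟨-, h3, -⟩ := heq1
    subst h3
    have hstA : (some A, ([] : List (Symbol T g.NT)), α') ∈ start g := by
      simpa using hst
    refine MAcc.reduce hstA (ih hq [Symbol.nonterminal A] ?_)
    rw [← hnext, hp'']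
    rfl

/-- Left-corner reachable nonterminals. -/
inductive LC (g : ContextFreeGrammar.{uN'} T) : g.NT → Prop
  | start : LC g g.initial
  | step {A B : g.NT} {β : List (Symbol T g.NT)} (r : ContextFreeRule T g.NT) :
      LC g A → r ∈ g.rules → r.input = A →
      r.output = Symbol.nonterminal B :: β → LC g B

lemma lc_parent {B : g.NT} (h : LC g B) :
    ∃ (C : Option g.NT) (β : List (Symbol T g.NT)),
      (C, ([] : List (Symbol T g.NT)), Symbol.nonterminal B :: β) ∈ start g := by
  induction h with
  | start => exact ⟨none, [], Closure.base rfl⟩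
  | @step A B β r hA hr hin hout ih =>
    obtain ⟨C, β₀, hmem⟩ := ih
    subst hin
    have hmem' : Closure g {((none : Option g.NT), ([] : List (Symbol T g.NT)),
        [Symbol.nonterminal g.initial])} (C, [], Symbol.nonterminal r.input :: β₀) := hmem
    exact ⟨some r.input, β, hout ▸ Closure.step r hmem' hr rfl⟩

lemma lc_rule_mem {A : g.NT} {r : ContextFreeRule T g.NT} (hA : LC g A)
    (hr : r ∈ g.rules) (hin : r.input = A) :
    (some A, ([] : List (Symbol T g.NT)), r.output) ∈ start g := by
  subst hin
  obtain ⟨C, β, hmem⟩ := lc_parent hA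
  have hmem' : Closure g {((none : Option g.NT), ([] : List (Symbol T g.NT)),
      [Symbol.nonterminal g.initial])} (C, [], Symbol.nonterminal r.input :: β) := hmem
  exact Closure.step r hmem' hr rfl

lemma lc_next_ne {A : g.NT} (hA : LC g A) :
    next g (start g) (Symbol.nonterminal A) ≠ ∅ := by
  obtain ⟨C, β, hmem⟩ := lc_parent hA
  exact next_ne_empty_of_mem hmem

lemma rewrites_terminal_false {r : ContextFreeRule T g.NT} {u : List T}
    {v : List (Symbol T g.NT)} (h : r.Rewrites (u.map Symbol.terminal) v) : False := by
  obtain ⟨p, q, hpq, -⟩ := h.exists_parts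
  have hC : Symbol.nonterminal r.input ∈ u.map (Symbol.terminal : T → Symbol T g.NT) := by
    rw [hpq]; simp
  exact nt_not_mem_map_terminal hC

lemma produces_terminal_false {u : List T} {v : List (Symbol T g.NT)}
    (h : g.Produces (u.map Symbol.terminal) v) : False := by
  obtain ⟨r, hr, hrw⟩ := h
  exact rewrites_terminal_false hrw

lemma rewrites_head {r : ContextFreeRule T g.NT} {B : g.NT} {u : List T}
    {v : List (Symbol T g.NT)}
    (h : r.Rewrites (Symbol.nonterminal B :: u.map Symbol.terminal) v) :
    r.input = B ∧ v = r.output ++ u.map Symbol.terminal := by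
  obtain ⟨p, q, hpq, hv⟩ := h.exists_parts
  cases p with
  | nil =>
    simp only [List.nil_append, List.singleton_append] at hpq hv
    obtain ⟨h1, h2⟩ := List.cons.inj hpq
    subst h2
    exact ⟨(Symbol.nonterminal.inj h1).symm, hv⟩
  | cons s p' =>
    exfalso
    simp only [List.cons_append, List.append_assoc] at hpq
    obtain ⟨-, h2⟩ := List.cons.inj hpq
    have hC : Symbol.nonterminal r.input ∈ u.map (Symbol.terminal : T → Symbol T g.NT) := by
      rw [h2]; simp
    exact nt_not_mem_map_terminal hC

lemma sentential (hg : LeftLinear g) {x : List (Symbol T g.NT)}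
    (h : g.Derives [Symbol.nonterminal g.initial] x) :
    (∃ u : List T, x = u.map Symbol.terminal) ∨
      ∃ (B : g.NT) (u : List T), LC g B ∧
        x = Symbol.nonterminal B :: u.map Symbol.terminal := by
  induction h with
  | refl => exact Or.inr ⟨g.initial, [], LC.start, rfl⟩
  | tail hd hp ih =>
    obtain ⟨r, hr, hrw⟩ := hp
    rcases ih with ⟨u, rfl⟩ | ⟨B, u, hB, rfl⟩
    · exact (rewrites_terminal_false hrw).elim
    · obtain ⟨hin, rfl⟩ := rewrites_head hrw
      rcases hg r hr with ⟨t, ht⟩ | ⟨C, t, ht⟩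
      · exact Or.inl ⟨t ++ u, by simp [ht]⟩
      · exact Or.inr ⟨C, t ++ u, LC.step r hB hr hin ht, by simp [ht]⟩

lemma mem_popSet (hg : LeftLinear g) {A : g.NT} {γ : List (Symbol T g.NT)}
    (hA : (some A, ([] : List (Symbol T g.NT)), γ) ∈ start g)
    (hne : next g (start g) (Symbol.nonterminal A) ≠ ∅) :
    uNext g E (uStart g E) (Symbol.nonterminal A) ∈
      PopSet g E (uNextStar g E (uStart g E) γ) := by
  refine ⟨A, γ, uStart g E, ⟨[], Stacks.nil, rfl⟩, ?_, hA, rfl, hne, rfl⟩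
  exact mem_uNextStar_start hg (by simpa using hA)

lemma shifts (hg : LeftLinear g) (t : List T) :
    ∀ (γ : List (Symbol T g.NT)) {A : Option g.NT} {β : List (Symbol T g.NT)}
      {w : List T} {q : UState g},
      (A, ([] : List (Symbol T g.NT)), γ ++ t.map Symbol.terminal ++ β) ∈ start g →
      FPath g E (uNextStar g E (uStart g E) (γ ++ t.map Symbol.terminal)) w q →
      FPath g E (uNextStar g E (uStart g E) γ) (t ++ w) q := by
  induction t with
  | nil => intro γ A β w q h hp; simpa using hp
  | cons x t ih =>
    intro γ A β w q h hp
    have hmem : (A, γ, Symbol.terminal x :: (t.map Symbol.terminal ++ β)) ∈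
        (uNextStar g E (uStart g E) γ).1 :=
      mem_uNextStar_start hg (by simpa [List.append_assoc] using h)
    show FPath g E _ (x :: (t ++ w)) q
    refine FPath.shift (next_ne_empty_of_mem hmem) ?_
    rw [← uNextStar_snoc]
    refine ih (γ ++ [Symbol.terminal x]) (A := A) (β := β) ?_ ?_
    · simpa [List.map_cons, List.cons_append, List.append_assoc] using h
    · have hl : γ ++ [Symbol.terminal x] ++ t.map Symbol.terminal =
        γ ++ (x :: t).map Symbol.terminal := by simp
      rw [hl]
      exact hp

lemma derives_fpath (hg : LeftLinear g) {x : List (Symbol T g.NT)}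
    (h : g.Derives [Symbol.nonterminal g.initial] x) :
    ∀ (B : g.NT) (u : List T), x = Symbol.nonterminal B :: u.map Symbol.terminal →
      ∃ q : UState g, IsFinal g q.1 ∧
        FPath g E (uNextStar g E (uStart g E) [Symbol.nonterminal B]) u q := by
  induction h with
  | refl =>
    intro B u hx
    obtain ⟨h1, h2⟩ := List.cons.inj hx
    obtain rfl : g.initial = B := Symbol.nonterminal.inj h1
    obtain rfl : u = [] := by
      cases u with
      | nil => rfl
      | cons a u => simp at h2
    refine ⟨uNextStar g E (uStart g E) [Symbol.nonterminal g.initial], ?_, FPath.refl _⟩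
    rw [IsFinal, uNextStar_fst, show (uStart g E).1 = start g from rfl,
      nextStar_start_eq hg]
    exact ⟨none, [], rfl, by simpa [start] using (Closure.base rfl :
      Closure g {((none : Option g.NT), ([] : List (Symbol T g.NT)),
        [Symbol.nonterminal g.initial])} (none, [], [Symbol.nonterminal g.initial]))⟩
  | tail hb hp ih =>
    intro B u hx
    rcases sentential hg hb with ⟨u₀, rfl⟩ | ⟨B', u₀, hB', rfl⟩
    · exact (produces_terminal_false hp).elim
    · obtain ⟨r, hr, hrw⟩ := hp
      obtain ⟨hin, rfl⟩ := rewrites_head hrw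
      rcases hg r hr with ⟨t, ht⟩ | ⟨C, t, ht⟩
      · exfalso
        rw [ht] at hx
        have hC : Symbol.nonterminal B ∈
            (t.map Symbol.terminal ++ u₀.map Symbol.terminal :
              List (Symbol T g.NT)) := by
          rw [hx]; simp
        rw [← List.map_append] at hC
        exact nt_not_mem_map_terminal hC
      · rw [ht] at hx
        simp only [List.cons_append] at hx
        obtain ⟨h1, h2⟩ := List.cons.inj hx
        obtain rfl : C = B := Symbol.nonterminal.inj h1
        have hu : t ++ u₀ = u := by
          apply List.map_injective_iff.mpr
            (fun a b hab => Symbol.terminal.inj hab)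
          rw [List.map_append]
          exact h2
        subst hu
        have hstart : (some B', ([] : List (Symbol T g.NT)),
            Symbol.nonterminal C :: t.map Symbol.terminal) ∈ start g := by
          rw [← ht]
          exact lc_rule_mem hB' hr hin
        obtain ⟨q, hql, hqp⟩ := ih B' u₀ rfl
        refine ⟨q, hql, ?_⟩
        refine shifts hg t [Symbol.nonterminal C] (β := []) (by simpa using hstart) ?_
        refine FPath.eps (mem_popSet hg (by simpa using hstart) (lc_next_ne hB')) ?_
        exact hqp

end LRApprox


/-- For a left-linear CFG `G`, the FSA `F` derived from `G`
by the basic approximation algorithm (the flattening of the recognizer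
unfolded by the collapsing stack congruence) satisfies `L(G) = L(F)`. -/
theorem left_linear_exact {T : Type*} (g : LRApprox.ContextFreeGrammar T)
    (hg : LeftLinear g) :
    ∀ w : List T, w ∈ g.language ↔ FAccepts g (CollCong g) w := by
  intro w
  rw [LRApprox.ContextFreeGrammar.mem_language_iff]
  constructor
  · intro h
    rcases Relation.ReflTransGen.cases_tail h with heq | ⟨b, hb, hp⟩
    · exfalso
      have hC : Symbol.nonterminal g.initial ∈
          w.map (Symbol.terminal : T → Symbol T g.NT) := by
        rw [heq]; simp
      exact nt_not_mem_map_terminal hC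
    · rcases sentential hg hb with ⟨u₀, rfl⟩ | ⟨B', u₀, hB', rfl⟩
      · exact (produces_terminal_false hp).elim
      · obtain ⟨r, hr, hrw⟩ := hp
        obtain ⟨hin, hout⟩ := rewrites_head hrw
        rcases hg r hr with ⟨t, ht⟩ | ⟨C, t, ht⟩
        · have hw : w = t ++ u₀ := by
            apply List.map_injective_iff.mpr
              (fun a b hab => Symbol.terminal.inj hab)
            rw [hout, ht, List.map_append]
          subst hw
          have hstart : (some B', ([] : List (Symbol T g.NT)),
              t.map Symbol.terminal) ∈ start g := by
            rw [← ht]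
            exact lc_rule_mem hB' hr hin
          obtain ⟨q, hql, hqp⟩ := derives_fpath (E := CollCong g) hg hb B' u₀ rfl
          refine ⟨q, hql, ?_⟩
          have h0 : FPath g (CollCong g)
              (uNextStar g (CollCong g) (uStart g (CollCong g)) []) (t ++ u₀) q := by
            refine shifts hg t [] (β := []) (by simpa using hstart) ?_
            refine FPath.eps (p' := uNext g (CollCong g) (uStart g (CollCong g))
              (Symbol.nonterminal B')) ?_ hqp
            exact mem_popSet hg (by simpa using hstart) (lc_next_ne hB')
          exact h0
        · exfalso
          have hC : Symbol.nonterminal C ∈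
              w.map (Symbol.terminal : T → Symbol T g.NT) := by
            rw [hout, ht]; simp
          exact nt_not_mem_map_terminal hC
  · rintro ⟨q, hql, hqp⟩
    have hM : MAcc g [] w := fpath_macc hg hqp hql [] rfl
    simpa using macc_derives hM
end
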